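/- Let A be a unital Banach algebra and J ⊆ A a closed two-sided ideal. Suppose S ∈ M_N(J) is such that I + S is invertible in M_N(A), and suppose the path s ↦ I + sS (s ∈ [0,1]) is null-homotopic in the space of elliptic elements Ell_N(A) = {a ∈ M_N(A) : a + M_N(J) invertible in M_N(A)/M_N(J)} relative to GL_N(A), via a homotopy h with h(s,0) = I + sS, h(s,1) = I, h(0,t) = I, and h(s,t) elliptic for all s,t, h(0,·), h(1,·), h(·,1) ∈ GL_N(A). If every path of invertibles in M_N(A/J) starting at I lifts to a path of invertibles in M_N(A) starting at I, then I + S is connected to I within {I + T : T ∈ M_N(J), I + T invertible}. -/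

import Mathlib

/-- An `N×N` matrix over `A` is elliptic relative to the ideal `J` if it is
invertible modulo matrices with entries in `J`. -/
def IsElliptic {A : Type*} [Ring A] (J : Set A) {N : ℕ}
    (a : Matrix (Fin N) (Fin N) A) : Prop :=
  ∃ q : Matrix (Fin N) (Fin N) A,
    (∀ i j, (a * q - 1) i j ∈ J) ∧ (∀ i j, (q * a - 1) i j ∈ J)

section Aux
attribute [local instance] Matrix.linftyOpNormedRing

variable {A : Type*} [NormedRing A] [NormedAlgebra ℂ A] [CompleteSpace A]
variable {J : Set A} {N : ℕ}

theorem matCompl : @CompleteSpace (Matrix (Fin N) (Fin N) A)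
    (PseudoMetricSpace.toUniformSpace) := by
  exact (inferInstance : CompleteSpace (Matrix (Fin N) (Fin N) A))

instance matHasSummableGeomSeries : HasSummableGeomSeries (Matrix (Fin N) (Fin N) A) :=
  @instHasSummableGeomSeriesOfCompleteSpace _ _ matCompl

theorem sumMemJ (hJ0 : (0:A) ∈ J) (hJadd : ∀ x ∈ J, ∀ y ∈ J, x + y ∈ J)
    {ι : Type*} (s : Finset ι) (f : ι → A) (hf : ∀ i ∈ s, f i ∈ J) :
    ∑ i ∈ s, f i ∈ J :=
  Finset.sum_induction f (· ∈ J) (fun x y hx hy => hJadd x hx y hy) hJ0 hf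

theorem mulMemJ_left (hJ0 : (0:A) ∈ J) (hJadd : ∀ x ∈ J, ∀ y ∈ J, x + y ∈ J)
    (hJmull : ∀ (a : A), ∀ x ∈ J, a * x ∈ J)
    (a m : Matrix (Fin N) (Fin N) A) (hm : ∀ i j, m i j ∈ J) :
    ∀ i j, (a * m) i j ∈ J := by
  intro i j
  rw [Matrix.mul_apply]
  exact sumMemJ hJ0 hJadd _ _ (fun l _ => hJmull _ _ (hm l j))

theorem subMemJ (hJadd : ∀ x ∈ J, ∀ y ∈ J, x + y ∈ J) (hJneg : ∀ x ∈ J, -x ∈ J)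
    {x y : A} (hx : x ∈ J) (hy : y ∈ J) : x - y ∈ J := by
  rw [sub_eq_add_neg]; exact hJadd x hx _ (hJneg y hy)

theorem isUnit_ringInv {x : Matrix (Fin N) (Fin N) A} (hx : IsUnit x) :
    IsUnit (Ring.inverse x) := by
  obtain ⟨u, rfl⟩ := hx
  rw [Ring.inverse_unit]; exact u⁻¹.isUnit

theorem isUnit_one_add' {x : Matrix (Fin N) (Fin N) A} (hx : ‖x‖ < 1) :
    IsUnit (1 + x) := by
  have := (Units.oneSub (-x) (by simpa using hx)).isUnit
  simpa [sub_neg_eq_add] using this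

theorem inverseCompCont (v : ℝ → Matrix (Fin N) (Fin N) A) (s : Set ℝ)
    (hc : ContinuousOn v s) (hu : ∀ t ∈ s, IsUnit (v t)) :
    ContinuousOn (fun t => Ring.inverse (v t)) s := by
  intro t ht
  have h1 : ContinuousAt Ring.inverse (v t) := by
    have := NormedRing.inverse_continuousAt (hu t ht).unit
    rwa [IsUnit.unit_spec] at this
  exact h1.comp_continuousWithinAt (hc t ht)

/-- The group `GL_N(A) ∩ (1 + M_N(J))`. -/
def GSet (J : Set A) (N : ℕ) : Set (Matrix (Fin N) (Fin N) A) :=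
  {x | IsUnit x ∧ ∀ i j, (x - 1) i j ∈ J}

theorem one_mem_GSet (hJ0 : (0:A) ∈ J) : (1 : Matrix (Fin N) (Fin N) A) ∈ GSet J N :=
  ⟨isUnit_one, fun i j => by simp [hJ0]⟩

theorem mul_mem_GSet (hJ0 : (0:A) ∈ J) (hJadd : ∀ x ∈ J, ∀ y ∈ J, x + y ∈ J)
    (hJmull : ∀ (a : A), ∀ x ∈ J, a * x ∈ J)
    {x y : Matrix (Fin N) (Fin N) A} (hx : x ∈ GSet J N) (hy : y ∈ GSet J N) :
    x * y ∈ GSet J N := by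
  refine ⟨hx.1.mul hy.1, fun i j => ?_⟩
  have : x * y - 1 = x * (y - 1) + (x - 1) := by rw [mul_sub, mul_one]; abel
  rw [this, Matrix.add_apply]
  exact hJadd _ (mulMemJ_left hJ0 hJadd hJmull x _ hy.2 i j) _ (hx.2 i j)

theorem ringInv_mem_GSet (hJ0 : (0:A) ∈ J) (hJadd : ∀ x ∈ J, ∀ y ∈ J, x + y ∈ J)
    (hJneg : ∀ x ∈ J, -x ∈ J) (hJmull : ∀ (a : A), ∀ x ∈ J, a * x ∈ J)
    {x : Matrix (Fin N) (Fin N) A} (hx : x ∈ GSet J N) :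
    Ring.inverse x ∈ GSet J N := by
  refine ⟨isUnit_ringInv hx.1, fun i j => ?_⟩
  have key : Ring.inverse x - 1 = -(Ring.inverse x * (x - 1)) := by
    rw [mul_sub, Ring.inverse_mul_cancel _ hx.1, mul_one, neg_sub]
  rw [key, Matrix.neg_apply]
  exact hJneg _ (mulMemJ_left hJ0 hJadd hJmull _ _ hx.2 i j)

theorem joinedIn_of_real {G : Set (Matrix (Fin N) (Fin N) A)}
    {x y : Matrix (Fin N) (Fin N) A} (γ : ℝ → Matrix (Fin N) (Fin N) A)
    (hc : ContinuousOn γ (Set.Icc 0 1)) (h0 : γ 0 = x) (h1 : γ 1 = y)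
    (hmem : ∀ t ∈ Set.Icc (0:ℝ) 1, γ t ∈ G) : JoinedIn G x y := by
  refine ⟨{ toFun := fun t : unitInterval => γ t,
            continuous_toFun := hc.restrict,
            source' := by simpa using h0,
            target' := by simpa using h1 }, fun t => hmem t t.2⟩

theorem JoinedIn.real_path {G : Set (Matrix (Fin N) (Fin N) A)}
    {x y : Matrix (Fin N) (Fin N) A} (hxy : JoinedIn G x y) :
    ∃ γ : ℝ → Matrix (Fin N) (Fin N) A, ContinuousOn γ (Set.Icc 0 1) ∧
      γ 0 = x ∧ γ 1 = y ∧ ∀ t ∈ Set.Icc (0:ℝ) 1, γ t ∈ G := by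
  obtain ⟨p, hp⟩ := hxy
  refine ⟨fun t => p (Set.projIcc 0 1 zero_le_one t),
    (p.continuous.comp continuous_projIcc).continuousOn, ?_, ?_, fun t _ => hp _⟩
  · simp [Set.projIcc_left]
  · simp [Set.projIcc_right]

theorem joinedIn_mul_left {G : Set (Matrix (Fin N) (Fin N) A)}
    {x y g : Matrix (Fin N) (Fin N) A} (hg : ∀ z ∈ G, g * z ∈ G)
    (hxy : JoinedIn G x y) : JoinedIn G (g * x) (g * y) := by
  obtain ⟨p, hp⟩ := hxy
  exact ⟨p.map (continuous_mul_left g), fun t => by simpa using hg _ (hp t)⟩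

theorem joinedIn_mul_right {G : Set (Matrix (Fin N) (Fin N) A)}
    {x y g : Matrix (Fin N) (Fin N) A} (hg : ∀ z ∈ G, z * g ∈ G)
    (hxy : JoinedIn G x y) : JoinedIn G (x * g) (y * g) := by
  obtain ⟨p, hp⟩ := hxy
  exact ⟨p.map (continuous_mul_right g), fun t => by simpa using hg _ (hp t)⟩

theorem joinedIn_ringInverse {x y : Matrix (Fin N) (Fin N) A}
    (hxy : JoinedIn (GSet J N) x y)
    (hJ0 : (0:A) ∈ J) (hJadd : ∀ x ∈ J, ∀ y ∈ J, x + y ∈ J)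
    (hJneg : ∀ x ∈ J, -x ∈ J) (hJmull : ∀ (a : A), ∀ x ∈ J, a * x ∈ J) :
    JoinedIn (GSet J N) (Ring.inverse x) (Ring.inverse y) := by
  obtain ⟨p, hp⟩ := hxy
  have hcont : Continuous fun t : unitInterval => Ring.inverse (p t) := by
    rw [continuous_iff_continuousAt]
    intro t
    have h1 : ContinuousAt Ring.inverse (p t) := by
      have := NormedRing.inverse_continuousAt (hp t).1.unit
      rwa [IsUnit.unit_spec] at this
    exact h1.comp p.continuous.continuousAt
  refine ⟨{ toFun := fun t => Ring.inverse (p t),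
            continuous_toFun := hcont,
            source' := by simp,
            target' := by simp }, fun t => ringInv_mem_GSet hJ0 hJadd hJneg hJmull (hp t)⟩

end Aux
section Main
attribute [local instance] Matrix.linftyOpNormedRing

set_option maxHeartbeats 1000000 in
theorem aux_main
    {A : Type*} [NormedRing A] [NormedAlgebra ℂ A] [CompleteSpace A]
    (J : Set A) (hJ0 : (0:A) ∈ J)
    (hJadd : ∀ x ∈ J, ∀ y ∈ J, x + y ∈ J)
    (hJneg : ∀ x ∈ J, -x ∈ J)
    (hJmull : ∀ (a : A), ∀ x ∈ J, a * x ∈ J)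
    (hJmulr : ∀ (a : A), ∀ x ∈ J, x * a ∈ J)
    (hJclosed : IsClosed J)
    {N : ℕ} (S : Matrix (Fin N) (Fin N) A)
    (hS : ∀ i j, S i j ∈ J)
    (hSinv : IsUnit (1 + S))
    (h : ℝ → ℝ → Matrix (Fin N) (Fin N) A)
    (hcont : ContinuousOn (fun p : ℝ × ℝ => h p.1 p.2)
      (Set.Icc 0 1 ×ˢ Set.Icc 0 1))
    (hbot : ∀ s ∈ Set.Icc (0:ℝ) 1, h s 0 = 1 + (s : ℂ) • S)
    (htop : ∀ s ∈ Set.Icc (0:ℝ) 1, h s 1 = 1)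
    (hleft : ∀ t ∈ Set.Icc (0:ℝ) 1, h 0 t = 1)
    (hellip : ∀ s ∈ Set.Icc (0:ℝ) 1, ∀ t ∈ Set.Icc (0:ℝ) 1,
      IsElliptic J (h s t))
    (hsides : ∀ t ∈ Set.Icc (0:ℝ) 1, IsUnit (h 0 t) ∧ IsUnit (h 1 t))
    (htopinv : ∀ s ∈ Set.Icc (0:ℝ) 1, IsUnit (h s 1))
    (hlift : ∀ u : ℝ → Matrix (Fin N) (Fin N) A,
      ContinuousOn u (Set.Icc 0 1) →
      (∀ t ∈ Set.Icc (0:ℝ) 1, IsElliptic J (u t)) →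
      u 0 = 1 →
      ∃ v : ℝ → Matrix (Fin N) (Fin N) A,
        ContinuousOn v (Set.Icc 0 1) ∧ v 0 = 1 ∧
        (∀ t ∈ Set.Icc (0:ℝ) 1, IsUnit (v t)) ∧
        (∀ t ∈ Set.Icc (0:ℝ) 1, ∀ i j, (u t - v t) i j ∈ J)) :
    ∃ γ : ℝ → Matrix (Fin N) (Fin N) A,
      ContinuousOn γ (Set.Icc 0 1) ∧
      γ 0 = 1 + S ∧ γ 1 = 1 ∧
      ∀ t ∈ Set.Icc (0:ℝ) 1,
        IsUnit (γ t) ∧ ∀ i j, (γ t - 1) i j ∈ J := by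
  classical
  have hIcc0 : (0:ℝ) ∈ Set.Icc (0:ℝ) 1 := ⟨le_refl 0, zero_le_one⟩
  have hIcc1 : (1:ℝ) ∈ Set.Icc (0:ℝ) 1 := ⟨zero_le_one, le_refl 1⟩
  have hIcchalf : (1/2 : ℝ) ∈ Set.Icc (0:ℝ) 1 := by constructor <;> norm_num
  -- the family of L-shaped paths
  set F : ℝ → ℝ → Matrix (Fin N) (Fin N) A :=
    fun s t => h (s * min (2*t) 1) (max (2*t - 1) 0) with hFdef
  have hmem1 : ∀ s ∈ Set.Icc (0:ℝ) 1, ∀ t ∈ Set.Icc (0:ℝ) 1,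
      s * min (2*t) 1 ∈ Set.Icc (0:ℝ) 1 := by
    intro s hs t ht
    have h1 : (0:ℝ) ≤ min (2*t) 1 := le_min (by linarith [ht.1]) zero_le_one
    have h2 : min (2*t) 1 ≤ 1 := min_le_right _ _
    exact ⟨mul_nonneg hs.1 h1, by nlinarith [hs.1, hs.2]⟩
  have hmem2 : ∀ t ∈ Set.Icc (0:ℝ) 1, max (2*t - 1) 0 ∈ Set.Icc (0:ℝ) 1 :=
    fun t ht => ⟨le_max_right _ _, max_le (by linarith [ht.2]) zero_le_one⟩
  have hFcont : ContinuousOn (fun p : ℝ × ℝ => F p.1 p.2)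
      (Set.Icc 0 1 ×ˢ Set.Icc 0 1) := by
    have hg : Continuous fun p : ℝ × ℝ =>
        (p.1 * min (2*p.2) 1, max (2*p.2 - 1) 0) := by
      refine Continuous.prodMk ?_ ?_
      · exact continuous_fst.mul ((continuous_const.mul continuous_snd).min continuous_const)
      · exact ((continuous_const.mul continuous_snd).sub continuous_const).max continuous_const
    refine hcont.comp hg.continuousOn ?_
    rintro ⟨s, t⟩ ⟨hs, ht⟩
    exact ⟨hmem1 s hs t ht, hmem2 t ht⟩
  have hFscont : ∀ s ∈ Set.Icc (0:ℝ) 1,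
      ContinuousOn (fun t => F s t) (Set.Icc 0 1) := by
    intro s hs
    have : ContinuousOn (fun t : ℝ => (s, t)) (Set.Icc 0 1) :=
      (continuous_const.prodMk continuous_id).continuousOn
    exact hFcont.comp this (fun t ht => ⟨hs, ht⟩)
  have hF0 : ∀ s ∈ Set.Icc (0:ℝ) 1, F s 0 = 1 := by
    intro s hs
    have e1 : s * min (2*(0:ℝ)) 1 = 0 := by norm_num
    have e2 : max (2*(0:ℝ) - 1) 0 = 0 := by norm_num
    simp only [hFdef, e1, e2]
    exact hleft 0 hIcc0
  have hF1 : ∀ s ∈ Set.Icc (0:ℝ) 1, F s 1 = 1 := by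
    intro s hs
    have e1 : s * min (2*(1:ℝ)) 1 = s := by norm_num
    have e2 : max (2*(1:ℝ) - 1) 0 = 1 := by norm_num
    simp only [hFdef, e1, e2]
    exact htop s hs
  have hFell : ∀ s ∈ Set.Icc (0:ℝ) 1, ∀ t ∈ Set.Icc (0:ℝ) 1,
      IsElliptic J (F s t) :=
    fun s hs t ht => hellip _ (hmem1 s hs t ht) _ (hmem2 t ht)
  have hFbot : ∀ s ∈ Set.Icc (0:ℝ) 1, ∀ t ∈ Set.Icc (0:ℝ) 1, t ≤ 1/2 →
      ∀ i j, (F s t - 1) i j ∈ J := by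
    intro s hs t ht ht2 i j
    have e2 : max (2*t - 1) 0 = 0 := max_eq_right (by linarith)
    have e : F s t = 1 + ((s * min (2*t) 1 : ℝ) : ℂ) • S := by
      simp only [hFdef, e2]
      exact hbot _ (hmem1 s hs t ht)
    rw [e, add_sub_cancel_left, Matrix.smul_apply, Algebra.smul_def]
    exact hJmull _ _ (hS i j)
  have hFhalf : F 1 (1/2 : ℝ) = 1 + S := by
    have e1 : (1:ℝ) * min (2*(1/2 : ℝ)) 1 = 1 := by norm_num
    have e2 : max (2*(1/2:ℝ) - 1) 0 = 0 := by norm_num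
    simp only [hFdef, e1, e2]
    rw [hbot 1 hIcc1]
    norm_num
  have hFtopunit : ∀ t ∈ Set.Icc (0:ℝ) 1, 1/2 ≤ t → IsUnit (F 1 t) := by
    intro t ht ht2
    have e1 : (1:ℝ) * min (2*t) 1 = 1 := by
      rw [min_eq_right (by linarith), mul_one]
    have e2 : max (2*t - 1) 0 = 2*t - 1 := max_eq_left (by linarith)
    simp only [hFdef, e1, e2]
    exact (hsides (2*t - 1) ⟨by linarith, by linarith [ht.2]⟩).2
  -- lifts
  set Lift : ℝ → (ℝ → Matrix (Fin N) (Fin N) A) → Prop := fun s v =>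
    ContinuousOn v (Set.Icc 0 1) ∧ v 0 = 1 ∧
      (∀ t ∈ Set.Icc (0:ℝ) 1, IsUnit (v t)) ∧
      (∀ t ∈ Set.Icc (0:ℝ) 1, ∀ i j, (F s t - v t) i j ∈ J) with hLiftdef
  set Pred : ℝ → Prop := fun s =>
    ∃ v, Lift s v ∧ JoinedIn (GSet J N) (v 1) 1 with hPreddef
  have hgetlift : ∀ s ∈ Set.Icc (0:ℝ) 1, ∃ v, Lift s v := by
    intro s hs
    obtain ⟨v, hvc, hv0, hvu, hvK⟩ :=
      hlift (fun t => F s t) (hFscont s hs) (fun t ht => hFell s hs t ht) (hF0 s hs)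
    exact ⟨v, hvc, hv0, hvu, hvK⟩
  have hendG : ∀ s ∈ Set.Icc (0:ℝ) 1, ∀ v, Lift s v → v 1 ∈ GSet J N := by
    intro s hs v hv
    obtain ⟨hvc, hv0, hvu, hvK⟩ := hv
    refine ⟨hvu 1 hIcc1, fun i j => ?_⟩
    have e : v 1 - 1 = -(F s 1 - v 1) := by
      rw [hF1 s hs]; exact (neg_sub _ _).symm
    rw [e, Matrix.neg_apply]
    exact hJneg _ (hvK 1 hIcc1 i j)
  -- comparison of two lifts of the same path
  have hcompare : ∀ s ∈ Set.Icc (0:ℝ) 1, ∀ v w, Lift s v → Lift s w →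
      JoinedIn (GSet J N) (v 1) (w 1) := by
    intro s hs v w hv hw
    have hv1G := hendG s hs v hv
    obtain ⟨hvc, hv0, hvu, hvK⟩ := hv
    obtain ⟨hwc, hw0, hwu, hwK⟩ := hw
    refine joinedIn_of_real (fun τ => v 1 * (Ring.inverse (v τ) * w τ)) ?_ ?_ ?_ ?_
    · exact continuousOn_const.mul ((inverseCompCont v _ hvc hvu).mul hwc)
    · show v 1 * (Ring.inverse (v 0) * w 0) = v 1
      rw [hv0, hw0, Ring.inverse_one, one_mul, mul_one]
    · show v 1 * (Ring.inverse (v 1) * w 1) = w 1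
      rw [← mul_assoc, Ring.mul_inverse_cancel _ (hvu 1 hIcc1), one_mul]
    · intro τ hτ
      refine ⟨hv1G.1.mul ((isUnit_ringInv (hvu τ hτ)).mul (hwu τ hτ)), fun i j => ?_⟩
      show (v 1 * (Ring.inverse (v τ) * w τ) - 1) i j ∈ J
      have key : Ring.inverse (v τ) * w τ = 1 + Ring.inverse (v τ) * (w τ - v τ) := by
        rw [mul_sub, Ring.inverse_mul_cancel _ (hvu τ hτ)]; abel
      have e : v 1 * (Ring.inverse (v τ) * w τ) - 1 =
          (v 1 - 1) + v 1 * (Ring.inverse (v τ) * (w τ - v τ)) := by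
        rw [key, mul_add, mul_one]; abel
      rw [e, Matrix.add_apply]
      refine hJadd _ (hv1G.2 i j) _ ?_
      refine mulMemJ_left hJ0 hJadd hJmull _ _ (fun i' j' => ?_) i j
      refine mulMemJ_left hJ0 hJadd hJmull _ _ (fun i'' j'' => ?_) i' j'
      have e2 : (w τ - v τ) i'' j'' =
          (F s τ - v τ) i'' j'' - (F s τ - w τ) i'' j'' := by
        simp [Matrix.sub_apply]
      rw [e2]
      exact subMemJ hJadd hJneg (hvK τ hτ i'' j'') (hwK τ hτ i'' j'')
  -- locally constant
  have hlocal : ∀ s : ℝ, ∃ δ > 0, s ∈ Set.Icc (0:ℝ) 1 →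
      ∀ s' ∈ Set.Icc (0:ℝ) 1, |s' - s| < δ → (Pred s' ↔ Pred s) := by
    intro s
    by_cases hs : s ∈ Set.Icc (0:ℝ) 1
    swap
    · exact ⟨1, one_pos, fun hs' => absurd hs' hs⟩
    obtain ⟨v, hv⟩ := hgetlift s hs
    obtain ⟨hvc, hv0, hvu, hvK⟩ := id hv
    obtain ⟨C, hC⟩ :=
      isCompact_Icc.exists_bound_of_continuousOn (inverseCompCont v _ hvc hvu)
    set C' := max C 0 with hC'def
    have hC'0 : (0:ℝ) ≤ C' := le_max_right _ _
    have hC' : ∀ t ∈ Set.Icc (0:ℝ) 1, ‖Ring.inverse (v t)‖ ≤ C' :=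
      fun t ht => (hC t ht).trans (le_max_left _ _)
    set ε := (C' + 1)⁻¹ with hεdef
    have hε : 0 < ε := by positivity
    have hUC := (isCompact_Icc.prod isCompact_Icc).uniformContinuousOn_of_continuous hFcont
    replace hUC := Metric.uniformContinuousOn_iff.mp hUC
    obtain ⟨δ, hδ0, hδ⟩ := hUC ε hε
    refine ⟨δ, hδ0, fun _ s' hs' hss' => ?_⟩
    have hdiff : ∀ t ∈ Set.Icc (0:ℝ) 1, ‖F s' t - F s t‖ < ε := by
      intro t ht
      have hd : dist ((s', t) : ℝ × ℝ) (s, t) < δ := by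
        rw [Prod.dist_eq, dist_self, Real.dist_eq, max_eq_left (abs_nonneg _)]
        exact hss'
      have := hδ (s', t) ⟨hs', ht⟩ (s, t) ⟨hs, ht⟩ hd
      rwa [dist_eq_norm] at this
    have hx : ∀ t ∈ Set.Icc (0:ℝ) 1,
        ‖Ring.inverse (v t) * (F s' t - F s t)‖ < 1 := by
      intro t ht
      have h1 : ‖Ring.inverse (v t) * (F s' t - F s t)‖ ≤
          ‖Ring.inverse (v t)‖ * ‖F s' t - F s t‖ := norm_mul_le _ _
      have h2 : ‖Ring.inverse (v t)‖ * ‖F s' t - F s t‖ ≤ C' * ‖F s' t - F s t‖ :=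
        mul_le_mul_of_nonneg_right (hC' t ht) (norm_nonneg _)
      have h3 : C' * ‖F s' t - F s t‖ ≤ C' * ε :=
        mul_le_mul_of_nonneg_left (hdiff t ht).le hC'0
      have h4 : C' * ε < 1 := by
        rw [hεdef]
        have hp : (0:ℝ) < C' + 1 := by linarith
        have := (div_lt_one hp).mpr (by linarith : C' < C' + 1)
        rwa [div_eq_mul_inv] at this
      linarith
    set v' : ℝ → Matrix (Fin N) (Fin N) A :=
      fun t => v t * (1 + Ring.inverse (v t) * (F s' t - F s t)) with hv'def
    have hv'lift : Lift s' v' := by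
      refine ⟨?_, ?_, ?_, ?_⟩
      · exact hvc.mul (continuousOn_const.add ((inverseCompCont v _ hvc hvu).mul
          ((hFscont s' hs').sub (hFscont s hs))))
      · simp only [hv'def]
        rw [hv0, hF0 s' hs', hF0 s hs]
        simp
      · intro t ht
        exact (hvu t ht).mul (isUnit_one_add' (hx t ht))
      · intro t ht i j
        have e : F s' t - v' t = F s t - v t := by
          simp only [hv'def]
          rw [mul_add, mul_one, ← mul_assoc, Ring.mul_inverse_cancel _ (hvu t ht), one_mul]
          abel
        rw [e]
        exact hvK t ht i j
    have hv'1 : v' 1 = v 1 := by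
      simp only [hv'def]
      rw [hF1 s' hs', hF1 s hs]
      simp
    constructor
    · rintro ⟨w, hw, hwjoin⟩
      refine ⟨v, hv, ?_⟩
      have hcomp := hcompare s' hs' v' w hv'lift hw
      rw [hv'1] at hcomp
      exact hcomp.trans hwjoin
    · rintro ⟨w, hw, hwjoin⟩
      refine ⟨v', hv'lift, ?_⟩
      rw [hv'1]
      exact (hcompare s hs v w hv hw).trans hwjoin
  -- Pred 0
  have hPred0 : Pred 0 := by
    refine ⟨fun _ => 1, ⟨continuousOn_const, rfl, fun t ht => isUnit_one, ?_⟩,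
      JoinedIn.refl (one_mem_GSet hJ0)⟩
    intro t ht i j
    have e : F 0 t = 1 := by
      have e1 : (0:ℝ) * min (2*t) 1 = 0 := by ring
      simp only [hFdef, e1]
      exact hleft _ (hmem2 t ht)
    rw [e]
    simpa using hJ0
  -- connectedness: Pred 1
  have hPred1 : Pred 1 := by
    by_contra hnot
    choose δ hδpos hδ using hlocal
    set U := ⋃ s ∈ {s : ℝ | s ∈ Set.Icc (0:ℝ) 1 ∧ Pred s}, Metric.ball s (δ s) with hUdef
    set V := ⋃ s ∈ {s : ℝ | s ∈ Set.Icc (0:ℝ) 1 ∧ ¬ Pred s}, Metric.ball s (δ s) with hVdef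
    have hUopen : IsOpen U := isOpen_biUnion fun _ _ => Metric.isOpen_ball
    have hVopen : IsOpen V := isOpen_biUnion fun _ _ => Metric.isOpen_ball
    have hcover : Set.Icc (0:ℝ) 1 ⊆ U ∪ V := by
      intro s hs
      by_cases hp : Pred s
      · exact Or.inl (Set.mem_biUnion ⟨hs, hp⟩ (Metric.mem_ball_self (hδpos s)))
      · exact Or.inr (Set.mem_biUnion ⟨hs, hp⟩ (Metric.mem_ball_self (hδpos s)))
    have hUne : (Set.Icc (0:ℝ) 1 ∩ U).Nonempty :=
      ⟨0, hIcc0, Set.mem_biUnion ⟨hIcc0, hPred0⟩ (Metric.mem_ball_self (hδpos 0))⟩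
    have hVne : (Set.Icc (0:ℝ) 1 ∩ V).Nonempty :=
      ⟨1, hIcc1, Set.mem_biUnion ⟨hIcc1, hnot⟩ (Metric.mem_ball_self (hδpos 1))⟩
    obtain ⟨x, hxIcc, hxU, hxV⟩ :=
      isPreconnected_Icc U V hUopen hVopen hcover hUne hVne
    simp only [hUdef, Set.mem_iUnion, Set.mem_setOf_eq, Metric.mem_ball,
      exists_prop] at hxU
    simp only [hVdef, Set.mem_iUnion, Set.mem_setOf_eq, Metric.mem_ball,
      exists_prop] at hxV
    obtain ⟨s₁, ⟨hs₁Icc, hs₁P⟩, hxb₁⟩ := hxU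
    obtain ⟨s₂, ⟨hs₂Icc, hs₂P⟩, hxb₂⟩ := hxV
    have e1 : Pred x ↔ Pred s₁ :=
      hδ s₁ hs₁Icc x hxIcc (by rwa [Real.dist_eq] at hxb₁)
    have e2 : Pred x ↔ Pred s₂ :=
      hδ s₂ hs₂Icc x hxIcc (by rwa [Real.dist_eq] at hxb₂)
    exact hs₂P (e2.mp (e1.mpr hs₁P))
  -- final assembly
  obtain ⟨v, hvLift, hvjoin⟩ := hPred1
  have hv1G : v 1 ∈ GSet J N := hendG 1 hIcc1 v hvLift
  obtain ⟨hvc, hv0, hvu, hvK⟩ := hvLift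
  have h12mem : ∀ τ ∈ Set.Icc (0:ℝ) 1, τ/2 ∈ Set.Icc (0:ℝ) 1 := by
    intro τ hτ
    constructor
    · linarith [hτ.1]
    · linarith [hτ.2]
  have h12mem' : ∀ τ ∈ Set.Icc (0:ℝ) 1, (τ+1)/2 ∈ Set.Icc (0:ℝ) 1 := by
    intro τ hτ
    constructor
    · linarith [hτ.1]
    · linarith [hτ.2]
  have hvmemG : ∀ x ∈ Set.Icc (0:ℝ) 1, x ≤ 1/2 → v x ∈ GSet J N := by
    intro x hx hx2
    refine ⟨hvu x hx, fun i j => ?_⟩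
    have e : v x - 1 = -(F 1 x - v x) + (F 1 x - 1) := by abel
    rw [e, Matrix.add_apply, Matrix.neg_apply]
    exact hJadd _ (hJneg _ (hvK x hx i j)) _ (hFbot 1 hIcc1 x hx hx2 i j)
  have haG : v (1/2 : ℝ) ∈ GSet J N := hvmemG _ hIcchalf (le_refl _)
  have J1 : JoinedIn (GSet J N) 1 (v (1/2 : ℝ)) := by
    refine joinedIn_of_real (fun τ => v (τ/2)) ?_ ?_ ?_ ?_
    · exact hvc.comp (continuous_id.div_const 2).continuousOn
        (fun τ hτ => h12mem τ hτ)
    · show v ((0:ℝ)/2) = 1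
      norm_num [hv0]
    · show v ((1:ℝ)/2) = v (1/2 : ℝ)
      norm_num
    · intro τ hτ
      exact hvmemG _ (h12mem τ hτ) (by linarith [hτ.2])
  have J2 : JoinedIn (GSet J N) (Ring.inverse (v (1/2:ℝ)) * (1 + S))
      (Ring.inverse (v 1)) := by
    refine joinedIn_of_real
      (fun τ => Ring.inverse (v ((τ+1)/2)) * F 1 ((τ+1)/2)) ?_ ?_ ?_ ?_
    · have hσ : ContinuousOn (fun τ : ℝ => (τ+1)/2) (Set.Icc 0 1) :=
        ((continuous_id.add continuous_const).div_const 2).continuousOn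
      exact ((inverseCompCont v _ hvc hvu).comp hσ h12mem').mul
        ((hFscont 1 hIcc1).comp hσ h12mem')
    · show Ring.inverse (v (((0:ℝ)+1)/2)) * F 1 (((0:ℝ)+1)/2) =
        Ring.inverse (v (1/2:ℝ)) * (1 + S)
      norm_num [hFhalf]
    · show Ring.inverse (v (((1:ℝ)+1)/2)) * F 1 (((1:ℝ)+1)/2) = Ring.inverse (v 1)
      norm_num [hF1 1 hIcc1]
    · intro τ hτ
      have hx : (τ+1)/2 ∈ Set.Icc (0:ℝ) 1 := h12mem' τ hτ
      have hx2 : (1:ℝ)/2 ≤ (τ+1)/2 := by linarith [hτ.1]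
      refine ⟨(isUnit_ringInv (hvu _ hx)).mul (hFtopunit _ hx hx2), fun i j => ?_⟩
      show (Ring.inverse (v ((τ+1)/2)) * F 1 ((τ+1)/2) - 1) i j ∈ J
      have e : Ring.inverse (v ((τ+1)/2)) * F 1 ((τ+1)/2) - 1 =
          Ring.inverse (v ((τ+1)/2)) * (F 1 ((τ+1)/2) - v ((τ+1)/2)) := by
        rw [mul_sub, Ring.inverse_mul_cancel _ (hvu _ hx)]
      rw [e]
      exact mulMemJ_left hJ0 hJadd hJmull _ _ (fun i' j' => hvK _ hx i' j') i j
  have haMul : ∀ z ∈ GSet J N, v (1/2:ℝ) * z ∈ GSet J N :=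
    fun z hz => mul_mem_GSet hJ0 hJadd hJmull haG hz
  have J2' := joinedIn_mul_left haMul J2
  have e1 : v (1/2:ℝ) * (Ring.inverse (v (1/2:ℝ)) * (1 + S)) = 1 + S := by
    rw [← mul_assoc, Ring.mul_inverse_cancel _ (hvu _ hIcchalf), one_mul]
  rw [e1] at J2'
  have hinvG : Ring.inverse (v 1) ∈ GSet J N :=
    ringInv_mem_GSet hJ0 hJadd hJneg hJmull hv1G
  have J4 := joinedIn_mul_right
    (fun z hz => mul_mem_GSet hJ0 hJadd hJmull hz hinvG) J1
  rw [one_mul] at J4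
  have J6 : JoinedIn (GSet J N) (Ring.inverse (v 1)) 1 := by
    have := joinedIn_ringInverse hvjoin hJ0 hJadd hJneg hJmull
    rwa [Ring.inverse_one] at this
  have final : JoinedIn (GSet J N) (1 + S) 1 := (J2'.trans J4.symm).trans J6
  obtain ⟨γ, hγc, hγ0, hγ1, hγmem⟩ := final.real_path
  exact ⟨γ, hγc, hγ0, hγ1, fun t ht => ⟨(hγmem t ht).1, (hγmem t ht).2⟩⟩

end Main

/-- Let `A` be a unital Banach algebra and `J ⊆ A` a closed
two-sided ideal. Suppose `S ∈ M_N(J)` with `I + S` invertible, and the path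
`s ↦ I + sS` is null-homotopic in the elliptic elements relative to
`GL_N(A)` via a homotopy `h` as described. If every path of invertibles in
`M_N(A/J)` starting at `I` lifts to a path of invertibles in `M_N(A)`
starting at `I`, then `I + S` is connected to `I` within
`{I + T : T ∈ M_N(J), I + T invertible}`. -/

theorem null_homotopic_elliptic_path_connects_in_ideal
    {A : Type*} [NormedRing A] [NormedAlgebra ℂ A] [CompleteSpace A]
    (J : Set A) (hJ0 : (0:A) ∈ J)
    (hJadd : ∀ x ∈ J, ∀ y ∈ J, x + y ∈ J)
    (hJneg : ∀ x ∈ J, -x ∈ J)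
    (hJmull : ∀ (a : A), ∀ x ∈ J, a * x ∈ J)
    (hJmulr : ∀ (a : A), ∀ x ∈ J, x * a ∈ J)
    (hJclosed : IsClosed J)
    {N : ℕ} (S : Matrix (Fin N) (Fin N) A)
    (hS : ∀ i j, S i j ∈ J)
    (hSinv : IsUnit (1 + S))
    (h : ℝ → ℝ → Matrix (Fin N) (Fin N) A)
    (hcont : ContinuousOn (fun p : ℝ × ℝ => h p.1 p.2)
      (Set.Icc 0 1 ×ˢ Set.Icc 0 1))
    (hbot : ∀ s ∈ Set.Icc (0:ℝ) 1, h s 0 = 1 + (s : ℂ) • S)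
    (htop : ∀ s ∈ Set.Icc (0:ℝ) 1, h s 1 = 1)
    (hleft : ∀ t ∈ Set.Icc (0:ℝ) 1, h 0 t = 1)
    (hellip : ∀ s ∈ Set.Icc (0:ℝ) 1, ∀ t ∈ Set.Icc (0:ℝ) 1,
      IsElliptic J (h s t))
    (hsides : ∀ t ∈ Set.Icc (0:ℝ) 1, IsUnit (h 0 t) ∧ IsUnit (h 1 t))
    (htopinv : ∀ s ∈ Set.Icc (0:ℝ) 1, IsUnit (h s 1))
    -- lifting of paths of invertibles from the quotient
    (hlift : ∀ u : ℝ → Matrix (Fin N) (Fin N) A,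
      ContinuousOn u (Set.Icc 0 1) →
      (∀ t ∈ Set.Icc (0:ℝ) 1, IsElliptic J (u t)) →
      u 0 = 1 →
      ∃ v : ℝ → Matrix (Fin N) (Fin N) A,
        ContinuousOn v (Set.Icc 0 1) ∧ v 0 = 1 ∧
        (∀ t ∈ Set.Icc (0:ℝ) 1, IsUnit (v t)) ∧
        (∀ t ∈ Set.Icc (0:ℝ) 1, ∀ i j, (u t - v t) i j ∈ J)) :
    ∃ γ : ℝ → Matrix (Fin N) (Fin N) A,
      ContinuousOn γ (Set.Icc 0 1) ∧
      γ 0 = 1 + S ∧ γ 1 = 1 ∧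
      ∀ t ∈ Set.Icc (0:ℝ) 1,
        IsUnit (γ t) ∧ ∀ i j, (γ t - 1) i j ∈ J := by
  exact aux_main J hJ0 hJadd hJneg hJmull hJmulr hJclosed S hS hSinv h hcont hbot
    htop hleft hellip hsides htopinv hlift
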